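/- For m = 1 and a proper sum-rank Hamming code C ⊆ F_q^n with equal sublengths N, redundancy r, and s the remainder of r mod N, the length satisfies N((q^r − q^s)/(q^N − 1) − q^s + 1) ≤ n ≤ N(q^r − q^s)/(q^N − 1), with equality throughout when s = 0, i.e., then n = N(q^r − 1)/(q^N − 1). -/

import Mathlib

universe u

open Finset

open Classical in
/-- Sum-rank weight for `m = 1` and equal sublengths `N`: number of nonzero blocks. -/
noncomputable def srwt {F : Type*} [Field F] {ℓ N : ℕ} (c : Fin ℓ → Fin N → F) : ℕ :=
  (Finset.univ.filter (fun i => c i ≠ 0)).card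

/-- A linear code in `F^{ℓN}` (with `m = 1` and equal sublengths `N`) with minimum
sum-rank distance at least `3` and redundancy `r`. -/
def IsGoodCode (F : Type*) [Field F] (ℓ N r : ℕ)
    (C : Submodule F (Fin ℓ → Fin N → F)) : Prop :=
  (∀ c ∈ C, c ≠ 0 → 3 ≤ srwt c) ∧ Module.finrank F C + r = ℓ * N

/-- A proper sum-rank Hamming code: a code as above for which the number of shots `ℓ`
is maximal. -/
def IsProperSRHamming (F : Type*) [Field F] (ℓ N r : ℕ)
    (C : Submodule F (Fin ℓ → Fin N → F)) : Prop :=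
  IsGoodCode F ℓ N r C ∧
    ∀ ℓ' : ℕ, ℓ < ℓ' → ¬ ∃ C' : Submodule F (Fin ℓ' → Fin N → F), IsGoodCode F ℓ' N r C'

open Polynomial in
theorem aux_ext (F : Type u) [Field F] [Fintype F] (m : ℕ) (hm : m ≠ 0) :
    ∃ (K : Type u) (_ : Field K) (_ : Algebra F K), Module.finrank F K = m := by
  classical
  obtain ⟨p, hchar⟩ := CharP.exists F
  haveI := hchar
  have hp : p.Prime := CharP.char_is_prime F p
  haveI : Fact p.Prime := ⟨hp⟩
  obtain ⟨e, -, hqe⟩ := FiniteField.card F p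
  have hq2 : 1 < Fintype.card F := Fintype.one_lt_card
  set q := Fintype.card F with hqdef
  set g : F[X] := X ^ q ^ m - X with hg
  refine ⟨SplittingField g, inferInstance, inferInstance, ?_⟩
  set K := SplittingField g with hK
  haveI : CharP K p := (Algebra.charP_iff F K p).mp hchar
  have hpq : p ∣ q ^ m := dvd_trans (hqe ▸ dvd_pow_self p e.ne_zero) (dvd_pow dvd_rfl hm)
  have hsep : g.Separable := galois_poly_separable p (q ^ m) hpq
  have hsplit : Splits (g.map (algebraMap F K)) := SplittingField.splits g
  have gne : g ≠ 0 := FiniteField.X_pow_card_pow_sub_X_ne_zero F hm hq2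
  have hdeg : g.natDegree = q ^ m := FiniteField.X_pow_card_pow_sub_X_natDegree_eq F hm hq2
  have key : Fintype.card (g.rootSet K) = q ^ m := by
    rw [card_rootSet_eq_natDegree hsep hsplit, hdeg]
  have pm : q ^ m = p ^ (e * m) := by rw [hqe, ← pow_mul]
  have hQ0 : q ^ m ≠ 0 := by positivity
  set S : Subalgebra F K :=
    { carrier := {x : K | x ^ q ^ m = x}
      mul_mem' := fun {a b} ha hb => by
        simp only [Set.mem_setOf_eq] at *; rw [mul_pow, ha, hb]
      one_mem' := by simp
      add_mem' := fun {a b} ha hb => by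
        simp only [Set.mem_setOf_eq] at *
        rw [pm] at ha hb ⊢
        rw [add_pow_char_pow, ha, hb]
      zero_mem' := by simp [zero_pow hQ0]
      algebraMap_mem' := fun r => by
        simp only [Set.mem_setOf_eq, ← map_pow]
        rw [FiniteField.pow_card_pow] } with hS
  have hsub : g.rootSet K ⊆ (S : Set K) := by
    intro x hx
    rw [mem_rootSet_of_ne gne] at hx
    simp only [hg, map_sub, aeval_X_pow, aeval_X, sub_eq_zero] at hx
    exact hx
  have hSt : S = ⊤ := by
    rw [eq_top_iff, ← SplittingField.adjoin_rootSet g]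
    exact Algebra.adjoin_le hsub
  have huniv : g.rootSet K = Set.univ := by
    apply Set.eq_univ_of_forall
    intro x
    rw [mem_rootSet_of_ne gne]
    have hx : x ∈ S := hSt ▸ Algebra.mem_top
    replace hx : x ^ q ^ m = x := hx
    simp only [hg, map_sub, aeval_X_pow, aeval_X, sub_eq_zero]
    exact hx
  haveI : FiniteDimensional F K := inferInstance
  haveI : Finite K := Module.finite_of_finite F
  haveI : Fintype K := Fintype.ofFinite K
  have hcardK : Fintype.card K = q ^ m := by
    rw [← key]
    exact (Fintype.card_congr ((Equiv.setCongr huniv).trans (Equiv.Set.univ K))).symm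
  have := Module.card_eq_pow_finrank (K := F) (V := K)
  rw [hcardK, ← hqdef] at this
  exact (Nat.pow_right_injective hq2 this.symm)

theorem srwt_le_of_subset {F : Type*} [Field F] {ℓ N : ℕ} {c : Fin ℓ → Fin N → F}
    {s : Finset (Fin ℓ)} (h : ∀ i, i ∉ s → c i = 0) : srwt c ≤ s.card := by
  classical
  apply Finset.card_le_card
  intro i hi
  simp only [srwt, Finset.mem_filter] at hi
  by_contra hns
  exact hi.2 (h i hns)

theorem sphere_packing {F : Type*} [Field F] [Fintype F] {ℓ N r : ℕ}
    (C : Submodule F (Fin ℓ → Fin N → F)) (h : IsGoodCode F ℓ N r C) :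
    1 + ℓ * (Fintype.card F ^ N - 1) ≤ Fintype.card F ^ r := by
  classical
  have hrankV : Module.finrank F (Fin ℓ → Fin N → F) = ℓ * N := by
    simp [Module.finrank_pi_fintype, Module.finrank_pi, mul_comm]
  have hquot : Module.finrank F ((Fin ℓ → Fin N → F) ⧸ C) = r := by
    have h1 := Submodule.finrank_quotient_add_finrank C
    have h2 := h.2
    rw [hrankV] at h1
    omega
  haveI : Fintype ((Fin ℓ → Fin N → F) ⧸ C) := Fintype.ofFinite _
  have hcard : Fintype.card ((Fin ℓ → Fin N → F) ⧸ C) = Fintype.card F ^ r := by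
    rw [Module.card_eq_pow_finrank (K := F), hquot]
  -- the injection
  set f : Option (Fin ℓ × {v : Fin N → F // v ≠ 0}) → (Fin ℓ → Fin N → F) ⧸ C :=
    fun o => match o with
      | none => 0
      | some (i, v) => Submodule.Quotient.mk (Pi.single i (v : Fin N → F))
    with hf
  have hmem : ∀ (i : Fin ℓ) (v : Fin N → F), v ≠ 0 →
      Pi.single (M := fun _ : Fin ℓ => Fin N → F) i v ∉ C := by
    intro i v hv hmem
    have hsupp : ∀ j, j ∉ ({i} : Finset (Fin ℓ)) →
        Pi.single (M := fun _ : Fin ℓ => Fin N → F) i v j = 0 := by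
      intro j hj
      rw [Finset.mem_singleton] at hj
      exact Pi.single_eq_of_ne (M := fun _ : Fin ℓ => Fin N → F) hj v
    have hle : srwt (Pi.single (M := fun _ : Fin ℓ => Fin N → F) i v) ≤ 1 := by
      simpa using srwt_le_of_subset hsupp
    have hne : Pi.single (M := fun _ : Fin ℓ => Fin N → F) i v ≠ 0 := by
      intro h0
      apply hv
      have := congrFun h0 i
      simpa using this
    have := h.1 _ hmem hne
    omega
  have hinj : Function.Injective f := by
    intro a b hab
    match a, b with
    | none, none => rfl
    | none, some (i, v) =>
      exfalso
      have : Pi.single (M := fun _ : Fin ℓ => Fin N → F) i (v : Fin N → F) ∈ C := by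
        rw [← Submodule.Quotient.mk_eq_zero]
        exact hab.symm
      exact hmem i v v.2 this
    | some (i, v), none =>
      exfalso
      have : Pi.single (M := fun _ : Fin ℓ => Fin N → F) i (v : Fin N → F) ∈ C := by
        rw [← Submodule.Quotient.mk_eq_zero]
        exact hab
      exact hmem i v v.2 this
    | some (i, v), some (j, w) =>
      have hdiff : Pi.single (M := fun _ : Fin ℓ => Fin N → F) i (v : Fin N → F)
          - Pi.single j (w : Fin N → F) ∈ C := by
        rw [← Submodule.Quotient.mk_eq_zero, Submodule.Quotient.mk_sub, sub_eq_zero]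
        exact hab
      have heq : Pi.single (M := fun _ : Fin ℓ => Fin N → F) i (v : Fin N → F)
          = Pi.single j (w : Fin N → F) := by
        by_contra hne
        have hsub : ∀ k, k ∉ ({i, j} : Finset (Fin ℓ)) →
            ((Pi.single (M := fun _ : Fin ℓ => Fin N → F) i (v : Fin N → F)
              - Pi.single j (w : Fin N → F) : Fin ℓ → Fin N → F)) k = 0 := by
          intro k hk
          simp only [Finset.mem_insert, Finset.mem_singleton, not_or] at hk
          simp [Pi.single_eq_of_ne (M := fun _ : Fin ℓ => Fin N → F) hk.1,
            Pi.single_eq_of_ne (M := fun _ : Fin ℓ => Fin N → F) hk.2]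
        have hle := srwt_le_of_subset hsub
        have hcard2 : ({i, j} : Finset (Fin ℓ)).card ≤ 2 :=
          Finset.card_insert_le _ _ |>.trans (by simp)
        have h3 := h.1 _ hdiff (sub_ne_zero_of_ne hne)
        omega
      -- conclude i = j and v = w
      have hij : i = j := by
        by_contra hij
        have := congrFun heq i
        rw [Pi.single_eq_same, Pi.single_eq_of_ne hij] at this
        exact v.2 this
      subst hij
      have hvw : (v : Fin N → F) = w := by
        have := congrFun heq i
        rwa [Pi.single_eq_same, Pi.single_eq_same] at this
      have : v = w := Subtype.ext hvw
      rw [this]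
  have hcount := Fintype.card_le_of_injective f hinj
  rw [hcard] at hcount
  have hdom : Fintype.card (Option (Fin ℓ × {v : Fin N → F // v ≠ 0}))
      = 1 + ℓ * (Fintype.card F ^ N - 1) := by
    rw [Fintype.card_option, Fintype.card_prod, Fintype.card_fin]
    have : Fintype.card {v : Fin N → F // v ≠ 0} = Fintype.card F ^ N - 1 := by
      rw [Fintype.card_subtype_compl, Fintype.card_subtype_eq]
      simp [Fintype.card_fun]
    rw [this]; ring
  omega

/-- family of injective linear maps with pairwise trivially-intersecting ranges -/
def GoodFam (F : Type u) [Field F] (N : ℕ) {V : Type u} [AddCommGroup V] [Module F V]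
    {ι : Type u} (u : ι → ((Fin N → F) →ₗ[F] V)) : Prop :=
  (∀ i x, u i x = 0 → x = 0) ∧ (∀ i j x y, i ≠ j → u i x = u j y → u i x = 0)

/-- pad a vector of length N to length d (N ≤ d, 0 < N) by precomposition with a
surjection Fin d → Fin N -/
noncomputable def padL (F : Type u) [Field F] (N d : ℕ) (hN : 0 < N) (h : N ≤ d) :
    (Fin N → F) →ₗ[F] (Fin d → F) :=
  LinearMap.funLeft F F (fun j : Fin d => if hj : (j : ℕ) < N then ⟨j, hj⟩ else ⟨0, hN⟩)

theorem padL_injective (F : Type u) [Field F] (N d : ℕ) (hN : 0 < N) (h : N ≤ d) :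
    Function.Injective (padL F N d hN h) := by
  apply LinearMap.funLeft_injective_of_surjective
  intro i
  exact ⟨⟨(i : ℕ), lt_of_lt_of_le i.2 h⟩, by simp [i.2]⟩

theorem exists_fam {F : Type u} [Field F] [Fintype F] (N : ℕ) (hN : 0 < N) (s : ℕ) (hs : s < N) :
    ∀ k : ℕ, 1 ≤ k →
    ∃ (V : Type u) (_ : AddCommGroup V) (_ : Module F V) (_ : FiniteDimensional F V)
      (ι : Type u) (_ : Fintype ι) (u : ι → ((Fin N → F) →ₗ[F] V)),
      Module.finrank F V = k * N + s ∧
      Fintype.card ι = 1 + ∑ j ∈ Finset.Ico 1 k, Fintype.card F ^ (j * N + s) ∧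
      GoodFam F N u := by
  intro k hk
  induction k with
  | zero => omega
  | succ k ih =>
    rcases Nat.eq_or_lt_of_le hk with hk1 | hk2
    · -- base case k+1 = 1
      have hk0 : k = 0 := by omega
      subst hk0
      refine ⟨(Fin (N + s) → F), inferInstance, inferInstance, inferInstance,
        PUnit, inferInstance, fun _ => padL F N (N + s) hN (Nat.le_add_right N s),
        ?_, ?_, ?_, ?_⟩
      · simp [Module.finrank_pi]
      · simp
      · intro i x hx
        exact padL_injective F N (N + s) hN (Nat.le_add_right N s) (by simpa using hx)
      · intro i j x y hij
        exact absurd rfl hij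
    · -- inductive step, k ≥ 1
      have hk' : 1 ≤ k := by omega
      obtain ⟨V, iV1, iV2, iV3, ι, iι, u, hrank, hcard, hfam⟩ := ih hk'
      set d := k * N + s with hd
      have hd0 : d ≠ 0 := by positivity
      obtain ⟨K, iK, aK, hK⟩ := aux_ext F d hd0
      letI := iK; letI := aK
      haveI : FiniteDimensional F K := FiniteDimensional.of_finrank_pos (by omega)
      haveI : Finite K := Module.finite_of_finite F
      haveI : Fintype K := Fintype.ofFinite K
      have hcardK : Fintype.card K = Fintype.card F ^ d := by
        rw [Module.card_eq_pow_finrank (K := F), hK]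
      -- injective linear map from F^N into K
      have hNd : N ≤ d := by
        calc N ≤ k * N := Nat.le_mul_of_pos_left N (by omega)
        _ ≤ d := by omega
      have hpad : Module.finrank F (Fin d → F) = d := by simp [Module.finrank_pi]
      obtain ⟨eK⟩ : Nonempty ((Fin d → F) ≃ₗ[F] K) :=
        ⟨LinearEquiv.ofFinrankEq _ _ (by rw [hpad, hK])⟩
      obtain ⟨eV⟩ : Nonempty (V ≃ₗ[F] K) :=
        ⟨LinearEquiv.ofFinrankEq _ _ (by rw [hrank, hK])⟩
      set ι0 : (Fin N → F) →ₗ[F] K :=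
        eK.toLinearMap.comp (padL F N d hN hNd) with hι0
      have hι0inj : ∀ x, ι0 x = 0 → x = 0 := by
        intro x hx
        rw [hι0] at hx
        simp only [LinearMap.coe_comp, Function.comp_apply, LinearEquiv.coe_coe] at hx
        have h2 : (padL F N d hN hNd) x = 0 := by rwa [eK.map_eq_zero_iff] at hx
        exact padL_injective F N d hN hNd (by rw [h2, map_zero])
      -- new ambient space and family
      refine ⟨(Fin N → F) × K, inferInstance, inferInstance, inferInstance,
        K ⊕ ι, inferInstance,
        fun a => match a with
          | Sum.inl a => LinearMap.prod LinearMap.id ((LinearMap.mulLeft F a).comp ι0)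
          | Sum.inr i => LinearMap.prod 0 (eV.toLinearMap.comp (u i)),
        ?_, ?_, ?_, ?_⟩
      · rw [Module.finrank_prod, hK, Module.finrank_pi]
        simp [hd]; ring
      · rw [Fintype.card_sum, hcardK, hcard]
        have : k + 1 = k + 1 := rfl
        rw [Finset.sum_Ico_succ_top hk']
        ring
      · rintro (a | i) x hx
        · simp only [LinearMap.prod_apply, Prod.mk_eq_zero, LinearMap.id_apply,
            Function.prod, LinearMap.coe_comp, Function.comp_apply] at hx
          exact hx.1
        · simp only [LinearMap.prod_apply, Prod.mk_eq_zero, Function.prod, LinearMap.coe_comp,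
            Function.comp_apply, LinearMap.zero_apply] at hx
          have := eV.map_eq_zero_iff.mp hx.2
          exact hfam.1 i x this
      · rintro (a | i) (b | j) x y hij heq
        · -- inl/inl
          have hab : a ≠ b := fun h => hij (by rw [h])
          simp only [LinearMap.prod_apply, Function.prod, LinearMap.id_apply, LinearMap.coe_comp,
            Function.comp_apply, Prod.mk.injEq, LinearMap.mulLeft_apply] at heq
          obtain ⟨hxy, hmul⟩ := heq
          subst hxy
          have : (a - b) * ι0 x = 0 := by rw [sub_mul, hmul]; ring
          have hx0 : ι0 x = 0 := by
            rcases mul_eq_zero.mp this with h | h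
            · exact absurd (sub_eq_zero.mp h) hab
            · exact h
          have : x = 0 := hι0inj x hx0
          subst this
          simp
        · -- inl/inr
          simp only [LinearMap.prod_apply, Function.prod, LinearMap.id_apply, LinearMap.coe_comp,
            Function.comp_apply, Prod.mk.injEq, LinearMap.zero_apply,
            LinearMap.mulLeft_apply] at heq
          have hx0 : x = 0 := heq.1
          subst hx0
          simp
        · -- inr/inl
          simp only [LinearMap.prod_apply, Function.prod, LinearMap.id_apply, LinearMap.coe_comp,
            Function.comp_apply, Prod.mk.injEq, LinearMap.zero_apply,
            LinearMap.mulLeft_apply] at heq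
          have hy0 : y = 0 := heq.1.symm
          subst hy0
          simp only [LinearMap.prod_apply, Function.prod, LinearMap.id_apply, LinearMap.coe_comp,
            Function.comp_apply, LinearMap.zero_apply, map_zero,
            LinearMap.mulLeft_apply, mul_zero] at heq ⊢
          ext <;> simp [heq.2]
        · -- inr/inr
          have hij' : i ≠ j := fun h => hij (by rw [h])
          have h2 : eV (u i x) = eV (u j y) := by
            simpa using congrArg Prod.snd heq
          have h0 := hfam.2 i j x y hij' (eV.injective h2)
          simp [h0]

theorem exists_code_of_fam {F : Type u} [Field F] [Fintype F] {N r t : ℕ}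
    {V : Type u} [AddCommGroup V] [Module F V] [FiniteDimensional F V]
    {ι : Type u} [Fintype ι] (uu : ι → ((Fin N → F) →ₗ[F] V))
    (hfam : GoodFam F N uu) (hrank : Module.finrank F V = r)
    (hcard : Fintype.card ι = t) (htN : r ≤ t * N) :
    ∃ C' : Submodule F (Fin t → Fin N → F), IsGoodCode F t N r C' := by
  classical
  set e : ι ≃ Fin t := Fintype.equivFinOfCardEq hcard with he
  set H : (Fin t → Fin N → F) →ₗ[F] V :=
    ∑ i : Fin t, (uu (e.symm i)).comp (LinearMap.proj i) with hH
  have hHapp : ∀ c, H c = ∑ i : Fin t, uu (e.symm i) (c i) := by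
    intro c
    rw [hH]
    simp [LinearMap.sum_apply]
  -- kernel property
  have hker : ∀ c ∈ LinearMap.ker H, c ≠ 0 → 3 ≤ srwt c := by
    intro c hc hc0
    by_contra hlt
    push_neg at hlt
    set S : Finset (Fin t) := Finset.univ.filter (fun i => c i ≠ 0) with hS
    have hScard : S.card ≤ 2 := by
      have : srwt c = S.card := rfl
      omega
    have hmemS : ∀ i, i ∈ S ↔ c i ≠ 0 := by intro i; simp [hS]
    have hsum : ∑ i ∈ S, uu (e.symm i) (c i) = 0 := by
      have h0 : H c = 0 := hc
      rw [hHapp] at h0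
      rw [← h0]
      apply Finset.sum_subset (Finset.subset_univ S)
      intro i _ hi
      have : c i = 0 := by
        by_contra hne
        exact hi ((hmemS i).mpr hne)
      rw [this, map_zero]
    have hSne : S.Nonempty := by
      rcases Finset.eq_empty_or_nonempty S with hS0 | hS0
      · exfalso
        apply hc0
        funext i
        have : i ∉ S := by rw [hS0]; exact Finset.notMem_empty i
        rw [hmemS] at this
        push_neg at this
        rw [this]; rfl
      · exact hS0
    obtain ⟨a, ha⟩ := hSne
    have hca : c a ≠ 0 := (hmemS a).mp ha
    rcases Finset.eq_empty_or_nonempty (S.erase a) with her | ⟨b, hb⟩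
    · -- S = {a}
      have hSa : S = {a} := by
        apply Finset.eq_singleton_iff_unique_mem.mpr
        refine ⟨ha, fun x hx => ?_⟩
        by_contra hxa
        exact (Finset.notMem_empty x) (her ▸ Finset.mem_erase.mpr ⟨hxa, hx⟩)
      rw [hSa, Finset.sum_singleton] at hsum
      exact hca (hfam.1 _ _ hsum)
    · have hba : b ≠ a := (Finset.mem_erase.mp hb).1
      have hbS : b ∈ S := (Finset.mem_erase.mp hb).2
      have hSab : S = {a, b} := by
        apply Finset.Subset.antisymm
        · intro x hx
          by_contra hxab
          simp only [Finset.mem_insert, Finset.mem_singleton, not_or] at hxab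
          have h2 : ({a, b, x} : Finset (Fin t)) ⊆ S := by
            intro y hy
            simp only [Finset.mem_insert, Finset.mem_singleton] at hy
            rcases hy with rfl | rfl | rfl
            · exact ha
            · exact hbS
            · exact hx
          have h3 : ({a, b, x} : Finset (Fin t)).card = 3 := by
            rw [Finset.card_eq_three]
            exact ⟨a, b, x, Ne.symm hba, Ne.symm hxab.1, Ne.symm hxab.2, rfl⟩
          have := Finset.card_le_card h2
          omega
        · intro x hx
          simp only [Finset.mem_insert, Finset.mem_singleton] at hx
          rcases hx with rfl | rfl
          · exact ha
          · exact hbS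
      rw [hSab, Finset.sum_pair (Ne.symm hba)] at hsum
      have heq : uu (e.symm a) (c a) = uu (e.symm b) (-(c b)) := by
        rw [map_neg]
        exact eq_neg_of_add_eq_zero_left hsum
      have hab' : e.symm a ≠ e.symm b := fun h => hba (e.symm.injective h).symm
      have := hfam.2 _ _ _ _ hab' heq
      exact hca (hfam.1 _ _ this)
  -- dimension of the kernel
  have hdim : Module.finrank F (Fin t → Fin N → F) = t * N := by
    simp [Module.finrank_pi_fintype, Module.finrank_pi, mul_comm]
  have hrk := LinearMap.finrank_range_add_finrank_ker H
  rw [hdim] at hrk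
  have hrange : Module.finrank F (LinearMap.range H) ≤ r := by
    rw [← hrank]; exact (LinearMap.range H).finrank_le
  have hkerdim : t * N - r ≤ Module.finrank F (LinearMap.ker H) := by omega
  -- pick a subspace of the kernel of dimension t*N - r
  set n := t * N - r with hn
  set B := Module.finBasis F (LinearMap.ker H) with hB
  have hcast : n ≤ Module.finrank F (LinearMap.ker H) := hkerdim
  set v : Fin n → (Fin t → Fin N → F) :=
    fun i => ((B (Fin.castLE hcast i)) : Fin t → Fin N → F) with hv
  have hli : LinearIndependent F v := by
    have h1 : LinearIndependent F (fun i : Fin n => B (Fin.castLE hcast i)) :=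
      B.linearIndependent.comp (Fin.castLE hcast) (Fin.castLE_injective hcast)
    exact h1.map' (LinearMap.ker H).subtype (Submodule.ker_subtype _)
  refine ⟨Submodule.span F (Set.range v), ?_, ?_⟩
  · intro c hc hc0
    apply hker c _ hc0
    have hsub : Submodule.span F (Set.range v) ≤ LinearMap.ker H := by
      rw [Submodule.span_le]
      rintro _ ⟨i, rfl⟩
      exact (B (Fin.castLE hcast i)).2
    exact hsub hc
  · rw [finrank_span_eq_card hli, Fintype.card_fin]
    omega

theorem geom_aux (q N s : ℕ) (hq : 1 ≤ q) :
    ∀ k, 1 ≤ k →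
      (q ^ N - 1) * (q ^ s + ∑ j ∈ Finset.Ico 1 k, q ^ (j * N + s)) + q ^ s
        = q ^ (k * N + s) := by
  have hQ1 : 1 ≤ q ^ N := Nat.one_le_pow _ _ hq
  intro k hk
  induction k, hk using Nat.le_induction with
  | base =>
    rw [show Finset.Ico 1 1 = ∅ from rfl, Finset.sum_empty, add_zero]
    have : (q ^ N - 1) * q ^ s + q ^ s = ((q ^ N - 1) + 1) * q ^ s := by ring
    rw [this, Nat.sub_add_cancel hQ1, ← pow_add]
    congr 1
    ring
  | succ k hk ih =>
    rw [Finset.sum_Ico_succ_top hk]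
    set Q1 := q ^ N - 1 with hQ1def
    calc Q1 * (q ^ s + (∑ j ∈ Finset.Ico 1 k, q ^ (j * N + s) + q ^ (k * N + s))) + q ^ s
        = (Q1 * (q ^ s + ∑ j ∈ Finset.Ico 1 k, q ^ (j * N + s)) + q ^ s)
            + Q1 * q ^ (k * N + s) := by ring
      _ = q ^ (k * N + s) + Q1 * q ^ (k * N + s) := by rw [ih]
      _ = (Q1 + 1) * q ^ (k * N + s) := by ring
      _ = q ^ N * q ^ (k * N + s) := by rw [hQ1def, Nat.sub_add_cancel hQ1]
      _ = q ^ ((k + 1) * N + s) := by rw [← pow_add]; congr 1; ring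

/-- length bounds for proper sum-rank Hamming codes with `m = 1`:
`N((q^r − q^s)/(q^N − 1) − q^s + 1) ≤ n ≤ N(q^r − q^s)/(q^N − 1)` with `s = r % N`,
and `n = N(q^r − 1)/(q^N − 1)` when `s = 0`. -/
theorem proper_srHamming_length_bounds {F : Type*} [Field F] [Fintype F]
    {ℓ N r : ℕ} (hN : 0 < N) (hNr : N ≤ r)
    (C : Submodule F (Fin ℓ → Fin N → F)) (hC : IsProperSRHamming F ℓ N r C) :
    (N * ((Fintype.card F ^ r - Fintype.card F ^ (r % N)) / (Fintype.card F ^ N - 1)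
        - Fintype.card F ^ (r % N) + 1) ≤ ℓ * N ∧
      ℓ * N ≤ N * ((Fintype.card F ^ r - Fintype.card F ^ (r % N)) /
        (Fintype.card F ^ N - 1))) ∧
    (r % N = 0 →
      ℓ * N = N * ((Fintype.card F ^ r - 1) / (Fintype.card F ^ N - 1))) := by
  classical
  obtain ⟨hgood, hmax⟩ := hC
  set q := Fintype.card F with hq
  have hq2 : 1 < q := Fintype.one_lt_card
  set s := r % N with hsdef
  set k := r / N with hkdef
  have hs : s < N := Nat.mod_lt _ hN
  have hk1 : 1 ≤ k := (Nat.one_le_div_iff hN).mpr hNr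
  have hr : k * N + s = r := by
    rw [hkdef, hsdef, mul_comm]
    exact Nat.div_add_mod r N
  set Sig := ∑ j ∈ Finset.Ico 1 k, q ^ (j * N + s) with hSig
  have hgeom := geom_aux q N s (by omega) k hk1
  rw [hr] at hgeom
  rw [← hSig] at hgeom
  have hQN : 1 < q ^ N := Nat.one_lt_pow (by omega) hq2
  have hDeq : (q ^ r - q ^ s) / (q ^ N - 1) = q ^ s + Sig := by
    have h1 : q ^ r - q ^ s = (q ^ N - 1) * (q ^ s + Sig) := by omega
    rw [h1, Nat.mul_div_cancel_left _ (by omega : 0 < q ^ N - 1)]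
  have hpack := sphere_packing C hgood
  rw [← hq] at hpack
  have hub : ℓ ≤ q ^ s + Sig := by
    by_contra hcon
    push_neg at hcon
    have h1 : (q ^ s + Sig + 1) * (q ^ N - 1) ≤ ℓ * (q ^ N - 1) :=
      Nat.mul_le_mul_right _ hcon
    have h2 : (q ^ s + Sig + 1) * (q ^ N - 1)
        = (q ^ N - 1) * (q ^ s + Sig) + (q ^ N - 1) := by ring
    have h3 : q ^ s < q ^ N := Nat.pow_lt_pow_right hq2 hs
    omega
  have hg2 := hgood.2
  have hl1 : 1 ≤ ℓ := by
    by_contra hcon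
    push_neg at hcon
    have h0 : ℓ = 0 := by omega
    have hz : ℓ * N = 0 := by rw [h0, zero_mul]
    omega
  have hlb : Sig + 1 ≤ ℓ := by
    by_contra hcon
    push_neg at hcon
    rcases Nat.lt_or_ge k 2 with hk2 | hk2
    · have hk1' : k = 1 := by omega
      have hS0 : Sig = 0 := by rw [hSig, hk1']; simp
      omega
    · have hterm : q ^ ((k - 1) * N + s) ≤ Sig := by
        rw [hSig]
        apply Finset.single_le_sum (f := fun j => q ^ (j * N + s))
          (fun _ _ => Nat.zero_le _)
        rw [Finset.mem_Ico]
        omega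
      have hbig : (k - 1) * N + s + 1 ≤ q ^ ((k - 1) * N + s) := by
        have h1 : (k - 1) * N + s < 2 ^ ((k - 1) * N + s) := Nat.lt_two_pow_self
        have h2 : 2 ^ ((k - 1) * N + s) ≤ q ^ ((k - 1) * N + s) :=
          Nat.pow_le_pow_left (by omega) _
        omega
      have hkN : (k - 1) * N + N = k * N := by
        have hkk : k - 1 + 1 = k := by omega
        calc (k - 1) * N + N = (k - 1 + 1) * N := by ring
        _ = k * N := by rw [hkk]
      have haux : (k - 1) * N + s ≤ ((k - 1) * N + s) * N :=
        Nat.le_mul_of_pos_right _ hN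
      have hrle : r ≤ (1 + Sig) * N := by
        have expand : (1 + Sig) * N = N + Sig * N := by ring
        have h5 : ((k - 1) * N + s + 1) * N = ((k - 1) * N + s) * N + N := by ring
        have h6 : ((k - 1) * N + s + 1) * N ≤ Sig * N :=
          Nat.mul_le_mul_right _ (le_trans hbig hterm)
        omega
      obtain ⟨V, iV1, iV2, iV3, ι, iι, uu, hrankV, hcard, hfam⟩ :=
        exists_fam (F := F) N hN s hs k hk1
      letI := iV1; letI := iV2; letI := iV3; letI := iι
      rw [hr] at hrankV
      obtain ⟨C', hC'⟩ := exists_code_of_fam uu hfam hrankV hcard hrle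
      exact hmax (1 + Sig) (by omega) ⟨C', hC'⟩
  refine ⟨⟨?_, ?_⟩, ?_⟩
  · rw [hDeq]
    have hEq : q ^ s + Sig - q ^ s + 1 = Sig + 1 := by omega
    rw [hEq, Nat.mul_comm N (Sig + 1)]
    exact Nat.mul_le_mul_right N hlb
  · rw [hDeq, Nat.mul_comm N (q ^ s + Sig)]
    exact Nat.mul_le_mul_right N hub
  · intro hs0
    have hq0 : q ^ s = 1 := by rw [hs0, pow_zero]
    have h1 : q ^ r - 1 = q ^ r - q ^ s := by rw [hq0]
    rw [h1, hDeq]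
    have h2 : ℓ = q ^ s + Sig := le_antisymm hub (by omega)
    rw [h2]
    exact Nat.mul_comm _ _
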